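/- Let a = (a1,a2,a3) be a unit vector with a1 ≥ a2 ≥ a3 > 0 and let t satisfy a1 - a2 + a3 ≤ t ≤ a1 + a2 - a3. Then the 3-dimensional Lebesgue measure of the slab {x ∈ [-1/2,1/2]^3 : |⟨a,x⟩| ≤ t/2} equals 1 - a3^2/(12·a1·a2) - (a1 + a2 - t)^2/(4·a1·a2). -/

import Mathlib

open MeasureTheory

noncomputable def Gslab (s : ℝ) : ℝ := max 0 s ^ 2 / 2
noncomputable def Hslab (s : ℝ) : ℝ := max 0 s ^ 3 / 6

lemma continuous_Gslab : Continuous Gslab := by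
  unfold Gslab; fun_prop

lemma Hslab_of_nonneg {s : ℝ} (h : 0 ≤ s) : Hslab s = s ^ 3 / 6 := by
  simp [Hslab, max_eq_right h]

lemma Hslab_of_nonpos {s : ℝ} (h : s ≤ 0) : Hslab s = 0 := by
  simp [Hslab, max_eq_left h]

lemma hasDerivAt_Gslab (s : ℝ) : HasDerivAt Gslab (max 0 s) s := by
  rcases lt_trichotomy s 0 with hs | hs | hs
  · rw [max_eq_left hs.le]
    refine (hasDerivAt_const s 0).congr_of_eventuallyEq ?_
    filter_upwards [Iio_mem_nhds hs] with x hx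
    simp [Gslab, max_eq_left (Set.mem_Iio.mp hx).le]
  · subst hs
    rw [max_self]
    rw [hasDerivAt_iff_tendsto_slope]
    rw [tendsto_zero_iff_abs_tendsto_zero]
    apply squeeze_zero (fun x => abs_nonneg _) (g := fun x : ℝ => |x| / 2)
    · intro x
      rcases le_or_gt x 0 with hx | hx
      · simp [slope_def_field, Gslab, max_eq_left hx]
        positivity
      · rw [slope_def_field, Gslab, Gslab, max_eq_right hx.le, max_self]
        rw [show (0:ℝ) ^ 2 / 2 = 0 by norm_num, sub_zero, sub_zero]
        rw [show x ^ 2 / 2 / x = x / 2 by field_simp]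
        rw [abs_div, abs_two, abs_of_pos hx]
    · have : Filter.Tendsto (fun x : ℝ => |x| / 2) (nhds 0) (nhds 0) := by
        have := (continuous_abs.tendsto (0:ℝ)).div_const 2
        simpa using this
      exact this.mono_left nhdsWithin_le_nhds
  · rw [max_eq_right hs.le]
    have : HasDerivAt (fun x : ℝ => x ^ 2 / 2) s s := by
      simpa using (hasDerivAt_pow 2 s).div_const 2
    refine this.congr_of_eventuallyEq ?_
    filter_upwards [Ioi_mem_nhds hs] with x hx
    simp [Gslab, max_eq_right (Set.mem_Ioi.mp hx).le]

lemma hasDerivAt_Hslab (s : ℝ) : HasDerivAt Hslab (Gslab s) s := by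
  rcases lt_trichotomy s 0 with hs | hs | hs
  · have : Gslab s = 0 := by simp [Gslab, max_eq_left hs.le]
    rw [this]
    refine (hasDerivAt_const s 0).congr_of_eventuallyEq ?_
    filter_upwards [Iio_mem_nhds hs] with x hx
    simp [Hslab, max_eq_left (Set.mem_Iio.mp hx).le]
  · subst hs
    have : Gslab 0 = 0 := by simp [Gslab]
    rw [this]
    rw [hasDerivAt_iff_tendsto_slope]
    rw [tendsto_zero_iff_abs_tendsto_zero]
    apply squeeze_zero (fun x => abs_nonneg _) (g := fun x : ℝ => x ^ 2 / 6)
    · intro x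
      rcases le_or_gt x 0 with hx | hx
      · simp [slope_def_field, Hslab, max_eq_left hx]
        positivity
      · rw [slope_def_field, Hslab, Hslab, max_eq_right hx.le, max_self]
        rw [show (0:ℝ) ^ 3 / 6 = 0 by norm_num, sub_zero, sub_zero]
        rw [show x ^ 3 / 6 / x = x ^ 2 / 6 by field_simp]
        rw [abs_of_nonneg (by positivity : (0:ℝ) ≤ x ^ 2 / 6)]
    · have : Filter.Tendsto (fun x : ℝ => x ^ 2 / 6) (nhds 0) (nhds 0) := by
        have := ((continuous_pow 2).tendsto (0:ℝ)).div_const 6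
        simpa using this
      exact this.mono_left nhdsWithin_le_nhds
  · have : Gslab s = s ^ 2 / 2 := by simp [Gslab, max_eq_right hs.le]
    rw [this]
    have h : HasDerivAt (fun x : ℝ => x ^ 3 / 6) (s ^ 2 / 2) s := by
      have := (hasDerivAt_pow 3 s).div_const 6
      convert! this using 1
      norm_num; ring
    refine h.congr_of_eventuallyEq ?_
    filter_upwards [Ioi_mem_nhds hs] with x hx
    simp [Hslab, max_eq_right (Set.mem_Ioi.mp hx).le]

set_option maxHeartbeats 1000000 in
theorem slab_cube3_g4
    (a1 a2 a3 t : ℝ) (hunit : a1 ^ 2 + a2 ^ 2 + a3 ^ 2 = 1)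
    (h12 : a1 ≥ a2) (h23 : a2 ≥ a3) (h3 : a3 > 0)
    (ht0 : a1 - a2 + a3 ≤ t) (ht1 : t ≤ a1 + a2 - a3) :
    volume {x : EuclideanSpace ℝ (Fin 3) |
        (∀ i, |x i| ≤ 1 / 2) ∧ |a1 * x 0 + a2 * x 1 + a3 * x 2| ≤ t / 2}
      = ENNReal.ofReal (1 - a3 ^ 2 / (12 * a1 * a2) - (a1 + a2 - t) ^ 2 / (4 * a1 * a2)) := by
  have ha2 : 0 < a2 := lt_of_lt_of_le h3 h23
  have ha1 : 0 < a1 := lt_of_lt_of_le ha2 h12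
  have htpos : 0 < t := by linarith
  -- Step 1: reduce to a set in ℝ × ℝ × ℝ
  set T : Set (ℝ × ℝ × ℝ) := {p : ℝ × ℝ × ℝ | (|p.2.2| ≤ 1/2 ∧ |p.2.1| ≤ 1/2 ∧ |p.1| ≤ 1/2)
        ∧ |a1 * p.2.2 + a2 * p.2.1 + a3 * p.1| ≤ t / 2} with hT
  have hTm : MeasurableSet T := by
    have : IsClosed T := by
      rw [hT]
      simp only [Set.setOf_and]
      refine IsClosed.inter (IsClosed.inter ?_ (IsClosed.inter ?_ ?_)) ?_ <;>
        apply isClosed_le <;> fun_prop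
    exact this.measurableSet
  have e2 : MeasurePreserving (fun y : Fin 2 → ℝ => (y 1, y 0)) volume volume := by
    have h := MeasureTheory.volume_preserving_piFinSuccAbove (fun _ : Fin 2 => ℝ) 1
    have hu := MeasureTheory.volume_preserving_funUnique (Fin 1) ℝ
    have hc := ((MeasurePreserving.id volume).prod hu).comp h
    rw [← Measure.volume_eq_prod] at hc
    convert! hc using 1
  have e1 := MeasureTheory.volume_preserving_piFinSuccAbove (fun _ : Fin 3 => ℝ) 2
  have Φ : MeasurePreserving (fun x : Fin 3 → ℝ => ((x 2, x 1, x 0) : ℝ × ℝ × ℝ))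
      volume volume := by
    have hc := ((MeasurePreserving.id volume).prod e2).comp e1
    rw [← Measure.volume_eq_prod] at hc
    convert! hc using 1
  have key : {x : EuclideanSpace ℝ (Fin 3) |
        (∀ i, |x i| ≤ 1 / 2) ∧ |a1 * x 0 + a2 * x 1 + a3 * x 2| ≤ t / 2}
      = (MeasurableEquiv.toLp 2 (Fin 3 → ℝ)).symm ⁻¹'
        ((fun x : Fin 3 → ℝ => ((x 2, x 1, x 0) : ℝ × ℝ × ℝ)) ⁻¹' T) := by
    ext x
    simp only [Set.mem_setOf_eq, Set.mem_preimage, hT, Fin.forall_fin_succ]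
    constructor
    · rintro ⟨⟨h0, h1, h2, -⟩, hl⟩; exact ⟨⟨h0, h1, h2⟩, hl⟩
    · rintro ⟨⟨h0, h1, h2⟩, hl⟩; exact ⟨⟨h0, h1, h2, fun i => i.elim0⟩, hl⟩
  rw [key,
    (EuclideanSpace.volume_preserving_symm_measurableEquiv_toLp (Fin 3)).measure_preimage
      ((Φ.measurable hTm)).nullMeasurableSet,
    Φ.measure_preimage hTm.nullMeasurableSet]
  -- Step 2: the computation in ℝ × ℝ × ℝ
  set u : ℝ := a1 - t with hu
  -- the length of the innermost fiber
  have fiber : ∀ y z : ℝ, {x : ℝ | |x| ≤ 1/2 ∧ |a1 * x + a2 * y + a3 * z| ≤ t/2}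
      = Set.Icc (max (-(1/2)) ((-(t/2) - (a2*y + a3*z))/a1))
          (min (1/2) ((t/2 - (a2*y + a3*z))/a1)) := by
    intro y z
    ext x
    simp only [Set.mem_setOf_eq, Set.mem_Icc, max_le_iff, le_min_iff, abs_le,
      div_le_iff₀ ha1, le_div_iff₀ ha1]
    constructor
    · rintro ⟨⟨h1, h2⟩, h3', h4⟩
      refine ⟨⟨h1, by nlinarith⟩, h2, by nlinarith⟩
    · rintro ⟨⟨h1, h2⟩, h3', h4⟩
      exact ⟨⟨h1, h3'⟩, by nlinarith, by nlinarith⟩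
  -- alternative form of the length
  have lenAlt : ∀ y z : ℝ,
      min (1/2) ((t/2 - (a2*y + a3*z))/a1) - max (-(1/2)) ((-(t/2) - (a2*y + a3*z))/a1)
      = 1 - (max 0 (u + 2*a2*y + 2*a3*z) + max 0 (u - 2*a2*y - 2*a3*z)) / (2*a1) := by
    intro y z
    rcases le_total 0 (u + 2*a2*y + 2*a3*z) with hX | hX <;>
      rcases le_total 0 (u - 2*a2*y - 2*a3*z) with hY | hY
    · rw [min_eq_right (by rw [div_le_iff₀ ha1]; rw [hu] at hX; linarith),
        max_eq_right (by rw [le_div_iff₀ ha1]; rw [hu] at hY; linarith),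
        max_eq_right hX, max_eq_right hY]
      rw [hu]; field_simp; ring
    · rw [min_eq_right (by rw [div_le_iff₀ ha1]; rw [hu] at hX; linarith),
        max_eq_left (by rw [div_le_iff₀ ha1]; rw [hu] at hY; linarith),
        max_eq_right hX, max_eq_left hY]
      rw [hu]; field_simp; ring
    · rw [min_eq_left (by rw [le_div_iff₀ ha1]; rw [hu] at hX; linarith),
        max_eq_right (by rw [le_div_iff₀ ha1]; rw [hu] at hY; linarith),
        max_eq_left hX, max_eq_right hY]
      rw [hu]; field_simp; ring
    · rw [min_eq_left (by rw [le_div_iff₀ ha1]; rw [hu] at hX; linarith),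
        max_eq_left (by rw [div_le_iff₀ ha1]; rw [hu] at hY; linarith),
        max_eq_left hX, max_eq_left hY]
      norm_num
  -- nonnegativity of the length
  have len_nonneg : ∀ y z : ℝ, |y| ≤ 1/2 → |z| ≤ 1/2 →
      0 ≤ min (1/2) ((t/2 - (a2*y + a3*z))/a1)
        - max (-(1/2)) ((-(t/2) - (a2*y + a3*z))/a1) := by
    intro y z hy hz
    obtain ⟨hy1, hy2⟩ := abs_le.mp hy
    obtain ⟨hz1, hz2⟩ := abs_le.mp hz
    have p1 : a2 * y ≤ a2 * (1/2) := mul_le_mul_of_nonneg_left hy2 ha2.le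
    have p2 : a2 * (-(1/2)) ≤ a2 * y := mul_le_mul_of_nonneg_left hy1 ha2.le
    have p3 : a3 * z ≤ a3 * (1/2) := mul_le_mul_of_nonneg_left hz2 h3.le
    have p4 : a3 * (-(1/2)) ≤ a3 * z := mul_le_mul_of_nonneg_left hz1 h3.le
    rw [sub_nonneg]
    apply max_le
    · apply le_min
      · norm_num
      · rw [le_div_iff₀ ha1]; nlinarith
    · apply le_min
      · rw [div_le_iff₀ ha1]; nlinarith
      · rw [div_le_div_iff_of_pos_right ha1]; linarith
  -- continuity of the length in y
  have len_cont : ∀ z : ℝ, Continuous (fun y : ℝ =>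
      min (1/2) ((t/2 - (a2*y + a3*z))/a1)
        - max (-(1/2)) ((-(t/2) - (a2*y + a3*z))/a1)) := by
    intro z; fun_prop
  -- the middle function
  set M : ℝ → ℝ := fun z => 1 - (Gslab (u + a2 + 2*a3*z) + Gslab (u + a2 - 2*a3*z)
      - Gslab (u - a2 + 2*a3*z) - Gslab (u - a2 - 2*a3*z)) / (4*a1*a2) with hM
  have hMcont : Continuous M := by
    rw [hM]
    refine continuous_const.sub (Continuous.div_const ?_ _)
    refine ((Continuous.add ?_ ?_).sub ?_).sub ?_ <;>
      exact continuous_Gslab.comp (by fun_prop)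
  -- level-2 FTC
  have ftc1 : ∀ z : ℝ, (∫ y in (-(1/2) : ℝ)..(1/2),
      (min (1/2) ((t/2 - (a2*y + a3*z))/a1)
        - max (-(1/2)) ((-(t/2) - (a2*y + a3*z))/a1))) = M z := by
    intro z
    have hd : ∀ y ∈ Set.uIcc (-(1/2) : ℝ) (1/2), HasDerivAt
        (fun y => y - (Gslab (u + 2*a2*y + 2*a3*z) - Gslab (u - 2*a2*y - 2*a3*z)) / (4*a1*a2))
        (min (1/2) ((t/2 - (a2*y + a3*z))/a1)
          - max (-(1/2)) ((-(t/2) - (a2*y + a3*z))/a1)) y := by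
      intro y _
      have h1 : HasDerivAt (fun y : ℝ => u + 2*a2*y + 2*a3*z) (2*a2) y := by
        simpa using ((((hasDerivAt_id y).const_mul (2*a2)).const_add u).add_const (2*a3*z))
      have h2 : HasDerivAt (fun y : ℝ => u - 2*a2*y - 2*a3*z) (-(2*a2)) y := by
        simpa using ((((hasDerivAt_id y).const_mul (2*a2)).const_sub u).sub_const (2*a3*z))
      have g1 := (hasDerivAt_Gslab (u + 2*a2*y + 2*a3*z)).comp y h1
      have g2 := (hasDerivAt_Gslab (u - 2*a2*y - 2*a3*z)).comp y h2
      have hder := (hasDerivAt_id y).sub ((g1.sub g2).div_const (4*a1*a2))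
      convert! hder using 1
      rw [lenAlt y z]
      field_simp
      ring
    rw [intervalIntegral.integral_eq_sub_of_hasDerivAt hd
      ((len_cont z).intervalIntegrable _ _)]
    rw [hM]
    simp only []
    rw [show u + 2*a2*(1/2 : ℝ) + 2*a3*z = u + a2 + 2*a3*z by ring,
      show u - 2*a2*(1/2 : ℝ) - 2*a3*z = u - a2 - 2*a3*z by ring,
      show u + 2*a2*(-(1/2) : ℝ) + 2*a3*z = u - a2 + 2*a3*z by ring,
      show u - 2*a2*(-(1/2) : ℝ) - 2*a3*z = u + a2 - 2*a3*z by ring]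
    field_simp
    ring
  -- nonnegativity of M
  have hM_nonneg : ∀ z ∈ Set.Icc (-(1/2) : ℝ) (1/2), 0 ≤ M z := by
    intro z hz
    rw [← ftc1 z]
    apply intervalIntegral.integral_nonneg (by norm_num)
    intro y hy
    exact len_nonneg y z (abs_le.mpr ⟨hy.1, hy.2⟩) (abs_le.mpr ⟨hz.1, hz.2⟩)
  -- compute the outer sections
  have sec_eq : ∀ z : ℝ, (volume : Measure (ℝ × ℝ)) (Prod.mk z ⁻¹' T)
      = Set.indicator (Set.Icc (-(1/2) : ℝ) (1/2)) (fun z => ENNReal.ofReal (M z)) z := by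
    intro z
    by_cases hz : |z| ≤ 1/2
    · rw [Set.indicator_of_mem (by rw [Set.mem_Icc]; exact abs_le.mp hz)]
      rw [Measure.volume_eq_prod, Measure.prod_apply (measurable_prodMk_left hTm)]
      have inner_eq : ∀ y : ℝ, volume (Prod.mk y ⁻¹' (Prod.mk z ⁻¹' T))
          = Set.indicator (Set.Icc (-(1/2) : ℝ) (1/2))
            (fun y => ENNReal.ofReal
              (min (1/2) ((t/2 - (a2*y + a3*z))/a1)
                - max (-(1/2)) ((-(t/2) - (a2*y + a3*z))/a1))) y := by
        intro y
        by_cases hy : |y| ≤ 1/2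
        · rw [Set.indicator_of_mem (by rw [Set.mem_Icc]; exact abs_le.mp hy)]
          have : Prod.mk y ⁻¹' (Prod.mk z ⁻¹' T)
              = {x : ℝ | |x| ≤ 1/2 ∧ |a1 * x + a2 * y + a3 * z| ≤ t/2} := by
            ext x
            simp only [Set.mem_preimage, hT, Set.mem_setOf_eq]
            constructor
            · rintro ⟨⟨hx, -, -⟩, hl⟩; exact ⟨hx, hl⟩
            · rintro ⟨hx, hl⟩; exact ⟨⟨hx, hy, hz⟩, hl⟩
          rw [this, fiber y z, Real.volume_Icc]
        · rw [Set.indicator_of_notMem (by rw [Set.mem_Icc]; exact fun h => hy (abs_le.mpr h))]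
          have : Prod.mk y ⁻¹' (Prod.mk z ⁻¹' T) = ∅ := by
            ext x
            simp only [Set.mem_preimage, hT, Set.mem_setOf_eq, Set.mem_empty_iff_false,
              iff_false]
            rintro ⟨⟨-, hy', -⟩, -⟩
            exact hy hy'
          rw [this, measure_empty]
      rw [lintegral_congr inner_eq, lintegral_indicator measurableSet_Icc]
      rw [← ofReal_integral_eq_lintegral_ofReal ((len_cont z).integrableOn_Icc)
        (by filter_upwards [ae_restrict_mem measurableSet_Icc] with y hy
            exact len_nonneg y z (abs_le.mpr ⟨hy.1, hy.2⟩) hz)]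
      congr 1
      rw [MeasureTheory.integral_Icc_eq_integral_Ioc,
        ← intervalIntegral.integral_of_le (by norm_num : (-(1/2) : ℝ) ≤ 1/2)]
      exact ftc1 z
    · rw [Set.indicator_of_notMem (by rw [Set.mem_Icc]; exact fun h => hz (abs_le.mpr h))]
      have : Prod.mk z ⁻¹' T = ∅ := by
        ext q
        simp only [Set.mem_preimage, hT, Set.mem_setOf_eq, Set.mem_empty_iff_false, iff_false]
        rintro ⟨⟨-, -, hz'⟩, -⟩
        exact hz hz'
      rw [this, measure_empty]
  -- assemble
  rw [Measure.volume_eq_prod, Measure.prod_apply hTm]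
  rw [lintegral_congr sec_eq, lintegral_indicator measurableSet_Icc]
  rw [← ofReal_integral_eq_lintegral_ofReal (hMcont.integrableOn_Icc)
    (by filter_upwards [ae_restrict_mem measurableSet_Icc] with z hz
        exact hM_nonneg z hz)]
  congr 1
  rw [MeasureTheory.integral_Icc_eq_integral_Ioc,
    ← intervalIntegral.integral_of_le (by norm_num : (-(1/2) : ℝ) ≤ 1/2)]
  -- level-3 FTC
  have hd : ∀ z ∈ Set.uIcc (-(1/2) : ℝ) (1/2), HasDerivAt
      (fun z => z - (Hslab (u + a2 + 2*a3*z) - Hslab (u + a2 - 2*a3*z)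
        - Hslab (u - a2 + 2*a3*z) + Hslab (u - a2 - 2*a3*z)) / (8*a1*a2*a3)) (M z) z := by
    intro z _
    have h1 : HasDerivAt (fun z : ℝ => u + a2 + 2*a3*z) (2*a3) z := by
      simpa using (((hasDerivAt_id z).const_mul (2*a3)).const_add (u + a2))
    have h2 : HasDerivAt (fun z : ℝ => u + a2 - 2*a3*z) (-(2*a3)) z := by
      simpa using (((hasDerivAt_id z).const_mul (2*a3)).const_sub (u + a2))
    have h3' : HasDerivAt (fun z : ℝ => u - a2 + 2*a3*z) (2*a3) z := by
      simpa using (((hasDerivAt_id z).const_mul (2*a3)).const_add (u - a2))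
    have h4 : HasDerivAt (fun z : ℝ => u - a2 - 2*a3*z) (-(2*a3)) z := by
      simpa using (((hasDerivAt_id z).const_mul (2*a3)).const_sub (u - a2))
    have g1 := (hasDerivAt_Hslab (u + a2 + 2*a3*z)).comp z h1
    have g2 := (hasDerivAt_Hslab (u + a2 - 2*a3*z)).comp z h2
    have g3 := (hasDerivAt_Hslab (u - a2 + 2*a3*z)).comp z h3'
    have g4 := (hasDerivAt_Hslab (u - a2 - 2*a3*z)).comp z h4
    have hder := (hasDerivAt_id z).sub ((((g1.sub g2).sub g3).add g4).div_const (8*a1*a2*a3))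
    convert! hder using 1
    rw [hM]
    field_simp
    ring
  rw [intervalIntegral.integral_eq_sub_of_hasDerivAt hd (hMcont.intervalIntegrable _ _)]
  beta_reduce
  rw [show u + a2 + 2*a3*(1/2 : ℝ) = u + a2 + a3 by ring,
    show u + a2 - 2*a3*(1/2 : ℝ) = u + a2 - a3 by ring,
    show u - a2 + 2*a3*(1/2 : ℝ) = u - a2 + a3 by ring,
    show u - a2 - 2*a3*(1/2 : ℝ) = u - a2 - a3 by ring,
    show u + a2 + 2*a3*(-(1/2) : ℝ) = u + a2 - a3 by ring,
    show u + a2 - 2*a3*(-(1/2) : ℝ) = u + a2 + a3 by ring,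
    show u - a2 + 2*a3*(-(1/2) : ℝ) = u - a2 - a3 by ring,
    show u - a2 - 2*a3*(-(1/2) : ℝ) = u - a2 + a3 by ring]
  rw [Hslab_of_nonneg (by rw [hu]; linarith : (0:ℝ) ≤ u + a2 + a3),
    Hslab_of_nonneg (by rw [hu]; linarith : (0:ℝ) ≤ u + a2 - a3),
    Hslab_of_nonpos (by rw [hu]; linarith : u - a2 + a3 ≤ 0),
    Hslab_of_nonpos (by rw [hu]; linarith : u - a2 - a3 ≤ 0)]
  rw [hu]
  field_simp
  ring
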